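/- Let S_m be the set of states z = (q, z^d, z^c, z^u), where q is a finite list over {1,…,n} and z^d, z^c, z^u ∈ ℕ^n, with length(q) + Σ_{i=1}^n (z^d_i + z^c_i + z^u_i) = m. Define the unnormalized weight ζ̄(z) = ∏_{i=1}^n (p_i/μ^{CS})^{count_i(q)} (p_i/μ^c_i)^{z^c_i} (1/z^d_i!)(p_i/μ^d_i)^{z^d_i} (1/z^u_i!)(p_i/μ^u_i)^{z^u_i}, where count_i(q) is the number of occurrences of i in q. Define transition rates r on S_m: for i, j ∈ {1,…,n}, r(z, z − e^d_i + e^c_i) = μ^d_i z^d_i; r(z, z − e^c_i + e^u_i) = μ^c_i if z^c_i > 0 and 0 otherwise; r(z, z^{+i} − e^u_i) = μ^u_i z^u_i, where z^{+i} appends i at the end of q; r(z, z_{−i} + e^d_j) = μ^{CS} p_j if q is nonempty with head equal to i (z_{−i} removes the head of q), and 0 otherwise; all other rates to states different from z are 0. Then ζ̄ satisfies the global balance equations: for every z ∈ S_m, Σ_{y ∈ S_m} ζ̄(y) r(y, z) = ζ̄(z) Σ_{y ∈ S_m} r(z, y). -/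

import Mathlib

open scoped BigOperators

/-- A sequence-level state: an ordered FIFO queue `q` of task classes at the central
server together with the vectors `d`, `c`, `u` counting tasks at each client's
downlink, computation, and uplink servers. -/
structure StSeq (n : ℕ) where
  q : List (Fin n)
  d : Fin n → ℕ
  c : Fin n → ℕ
  u : Fin n → ℕ
deriving DecidableEq

namespace StSeq

variable {n : ℕ}

/-- Total number of tasks in a sequence-level state. -/
def totalSeq (z : StSeq n) : ℕ := z.q.length + ∑ i, (z.d i + z.c i + z.u i)

/-- Unnormalized sequence-level weight `ζ̄(z)`. -/
noncomputable def zbar (p μc μd μu : Fin n → ℝ) (μCS : ℝ) (z : StSeq n) : ℝ :=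
  ∏ i,
    (p i / μCS) ^ (z.q.count i) * (p i / μc i) ^ z.c i *
      ((p i / μd i) ^ z.d i / (Nat.factorial (z.d i) : ℝ)) *
      ((p i / μu i) ^ z.u i / (Nat.factorial (z.u i) : ℝ))

/-- Jump `z - e^d_i + e^c_i` (download completion at client `i`). -/
def jDC (z : StSeq n) (i : Fin n) : StSeq n :=
  ⟨z.q, Function.update z.d i (z.d i - 1), Function.update z.c i (z.c i + 1), z.u⟩

/-- Jump `z - e^c_i + e^u_i` (computation completion at client `i`). -/
def jCU (z : StSeq n) (i : Fin n) : StSeq n :=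
  ⟨z.q, z.d, Function.update z.c i (z.c i - 1), Function.update z.u i (z.u i + 1)⟩

/-- Jump `z^{+i} - e^u_i` (upload completion at client `i`: the task joins the end of
the central-server queue). -/
def jApp (z : StSeq n) (i : Fin n) : StSeq n :=
  ⟨z.q ++ [i], z.d, z.c, Function.update z.u i (z.u i - 1)⟩

/-- Jump `z_{-head} + e^d_j` (central-server service completion: the head of the queue
leaves and a new task is routed to client `j`). -/
def jCS (z : StSeq n) (j : Fin n) : StSeq n :=
  ⟨z.q.tail, Function.update z.d j (z.d j + 1), z.c, z.u⟩

/-- Transition rates of the sequence-level generator. -/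
noncomputable def rate (p μc μd μu : Fin n → ℝ) (μCS : ℝ) (z y : StSeq n) : ℝ :=
  (∑ i, if y = jDC z i then μd i * (z.d i : ℝ) else 0) +
  (∑ i, if y = jCU z i then (if 0 < z.c i then μc i else 0) else 0) +
  (∑ i, if y = jApp z i then μu i * (z.u i : ℝ) else 0) +
  ∑ j, if y = jCS z j ∧ z.q ≠ [] then μCS * p j else 0

end StSeq

namespace StSeq

variable {n : ℕ}

-- auxiliary inverse jumps
def iA (z : StSeq n) (i : Fin n) : StSeq n :=
  ⟨z.q, Function.update z.d i (z.d i + 1), Function.update z.c i (z.c i - 1), z.u⟩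
def iB (z : StSeq n) (i : Fin n) : StSeq n :=
  ⟨z.q, z.d, Function.update z.c i (z.c i + 1), Function.update z.u i (z.u i - 1)⟩
def iC (z : StSeq n) (i : Fin n) : StSeq n :=
  ⟨z.q.dropLast, z.d, z.c, Function.update z.u i (z.u i + 1)⟩
def iD (z : StSeq n) (i j : Fin n) : StSeq n :=
  ⟨i :: z.q, Function.update z.d j (z.d j - 1), z.c, z.u⟩

lemma ext' {z y : StSeq n} (hq : z.q = y.q) (hd : z.d = y.d) (hc : z.c = y.c)
    (hu : z.u = y.u) : z = y := by cases z; cases y; simp_all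

lemma totalSeq_eq (z : StSeq n) :
    totalSeq z = z.q.length + ((∑ i, z.d i) + (∑ i, z.c i) + (∑ i, z.u i)) := by
  simp [totalSeq, Finset.sum_add_distrib]

lemma sum_update (f : Fin n → ℕ) (i : Fin n) (a : ℕ) :
    ∑ j, Function.update f i a j = a + ∑ j ∈ Finset.univ.erase i, f j := by
  rw [← Finset.sdiff_singleton_eq_erase]
  exact Finset.sum_update_of_mem (Finset.mem_univ i) f a

lemma sum_split (f : Fin n → ℕ) (i : Fin n) :
    ∑ j, f j = f i + ∑ j ∈ Finset.univ.erase i, f j :=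
  (Finset.add_sum_erase _ _ (Finset.mem_univ i)).symm
-- totalSeq of candidates
lemma totalSeq_iA_pos {z : StSeq n} {i : Fin n} (hc : 0 < z.c i) :
    totalSeq (iA z i) = totalSeq z := by
  simp only [totalSeq_eq, iA, sum_update]
  rw [sum_split z.d i, sum_split z.c i]
  omega

lemma totalSeq_iA_zero {z : StSeq n} {i : Fin n} (hc : z.c i = 0) :
    totalSeq (iA z i) = totalSeq z + 1 := by
  simp only [totalSeq_eq, iA, sum_update]
  rw [sum_split z.d i, sum_split z.c i]
  omega

lemma totalSeq_iB_pos {z : StSeq n} {i : Fin n} (hu : 0 < z.u i) :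
    totalSeq (iB z i) = totalSeq z := by
  simp only [totalSeq_eq, iB, sum_update]
  rw [sum_split z.c i, sum_split z.u i]
  omega

lemma totalSeq_iB_zero {z : StSeq n} {i : Fin n} (hu : z.u i = 0) :
    totalSeq (iB z i) = totalSeq z + 1 := by
  simp only [totalSeq_eq, iB, sum_update]
  rw [sum_split z.c i, sum_split z.u i]
  omega

lemma totalSeq_iC {z : StSeq n} {i : Fin n} (hq : z.q ≠ []) :
    totalSeq (iC z i) = totalSeq z := by
  simp only [totalSeq_eq, iC, sum_update, List.length_dropLast]
  rw [sum_split z.u i]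
  have : z.q.length ≠ 0 := fun h => hq (List.length_eq_zero_iff.mp h)
  omega

lemma totalSeq_iD_pos {z : StSeq n} {i j : Fin n} (hd : 0 < z.d j) :
    totalSeq (iD z i j) = totalSeq z := by
  simp only [totalSeq_eq, iD, sum_update, List.length_cons]
  rw [sum_split z.d j]
  omega

lemma totalSeq_iD_zero {z : StSeq n} {i j : Fin n} (hd : z.d j = 0) :
    totalSeq (iD z i j) = totalSeq z + 1 := by
  simp only [totalSeq_eq, iD, sum_update, List.length_cons]
  rw [sum_split z.d j]
  omega

-- totalSeq of forward jumps
lemma totalSeq_jDC_pos {z : StSeq n} {i : Fin n} (hd : 0 < z.d i) :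
    totalSeq (jDC z i) = totalSeq z := by
  simp only [totalSeq_eq, jDC, sum_update]
  rw [sum_split z.d i, sum_split z.c i]
  omega

lemma totalSeq_jDC_zero {z : StSeq n} {i : Fin n} (hd : z.d i = 0) :
    totalSeq (jDC z i) = totalSeq z + 1 := by
  simp only [totalSeq_eq, jDC, sum_update]
  rw [sum_split z.d i, sum_split z.c i]
  omega

lemma totalSeq_jCU_pos {z : StSeq n} {i : Fin n} (hc : 0 < z.c i) :
    totalSeq (jCU z i) = totalSeq z := by
  simp only [totalSeq_eq, jCU, sum_update]
  rw [sum_split z.c i, sum_split z.u i]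
  omega

lemma totalSeq_jApp_pos {z : StSeq n} {i : Fin n} (hu : 0 < z.u i) :
    totalSeq (jApp z i) = totalSeq z := by
  simp only [totalSeq_eq, jApp, sum_update, List.length_append, List.length_singleton]
  rw [sum_split z.u i]
  omega

lemma totalSeq_jApp_zero {z : StSeq n} {i : Fin n} (hu : z.u i = 0) :
    totalSeq (jApp z i) = totalSeq z + 1 := by
  simp only [totalSeq_eq, jApp, sum_update, List.length_append, List.length_singleton]
  rw [sum_split z.u i]
  omega

lemma totalSeq_jCS {z : StSeq n} {j : Fin n} (hq : z.q ≠ []) :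
    totalSeq (jCS z j) = totalSeq z := by
  simp only [totalSeq_eq, jCS, sum_update, List.length_tail]
  rw [sum_split z.d j]
  have : z.q.length ≠ 0 := fun h => hq (List.length_eq_zero_iff.mp h)
  omega
-- product helpers
lemma prod_piece (g : Fin n → ℕ → ℝ) (v : Fin n → ℕ) (i : Fin n) (a : ℕ) :
    ∏ j, g j (Function.update v i a j)
      = g i a * ∏ j ∈ Finset.univ.erase i, g j (v j) := by
  rw [← Finset.mul_prod_erase Finset.univ _ (Finset.mem_univ i), Function.update_self]
  exact congrArg _ (Finset.prod_congr rfl fun j hj => by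
    rw [Function.update_of_ne (Finset.ne_of_mem_erase hj)])

lemma prod_split (g : Fin n → ℕ → ℝ) (v : Fin n → ℕ) (i : Fin n) :
    ∏ j, g j (v j) = g i (v i) * ∏ j ∈ Finset.univ.erase i, g j (v j) :=
  (Finset.mul_prod_erase _ _ (Finset.mem_univ i)).symm

lemma zbar_eq (p μc μd μu : Fin n → ℝ) (μCS : ℝ) (z : StSeq n) :
    zbar p μc μd μu μCS z =
      (∏ k, (p k / μCS) ^ (z.q.count k)) * (∏ k, (p k / μc k) ^ (z.c k)) *
      (∏ k, ((p k / μd k) ^ (z.d k) / (Nat.factorial (z.d k) : ℝ))) *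
      (∏ k, ((p k / μu k) ^ (z.u k) / (Nat.factorial (z.u k) : ℝ))) := by
  simp [zbar, Finset.prod_mul_distrib]

-- specializations
lemma Pc_update (p μc : Fin n → ℝ) (v : Fin n → ℕ) (i : Fin n) (a : ℕ) :
    (∏ k, (p k / μc k) ^ (Function.update v i a k))
      = (p i / μc i) ^ a * ∏ k ∈ Finset.univ.erase i, (p k / μc k) ^ (v k) :=
  prod_piece (fun k x => (p k / μc k) ^ x) v i a

lemma Pc_split (p μc : Fin n → ℝ) (v : Fin n → ℕ) (i : Fin n) :
    (∏ k, (p k / μc k) ^ (v k))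
      = (p i / μc i) ^ (v i) * ∏ k ∈ Finset.univ.erase i, (p k / μc k) ^ (v k) :=
  prod_split (fun k x => (p k / μc k) ^ x) v i

lemma Pd_update (p μd : Fin n → ℝ) (v : Fin n → ℕ) (i : Fin n) (a : ℕ) :
    (∏ k, ((p k / μd k) ^ (Function.update v i a k) / (Nat.factorial (Function.update v i a k) : ℝ)))
      = ((p i / μd i) ^ a / (Nat.factorial a : ℝ)) *
        ∏ k ∈ Finset.univ.erase i, ((p k / μd k) ^ (v k) / (Nat.factorial (v k) : ℝ)) :=
  prod_piece (fun k x => (p k / μd k) ^ x / (Nat.factorial x : ℝ)) v i a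

lemma Pd_split (p μd : Fin n → ℝ) (v : Fin n → ℕ) (i : Fin n) :
    (∏ k, ((p k / μd k) ^ (v k) / (Nat.factorial (v k) : ℝ)))
      = ((p i / μd i) ^ (v i) / (Nat.factorial (v i) : ℝ)) *
        ∏ k ∈ Finset.univ.erase i, ((p k / μd k) ^ (v k) / (Nat.factorial (v k) : ℝ)) :=
  prod_split (fun k x => (p k / μd k) ^ x / (Nat.factorial x : ℝ)) v i

-- queue-count product lemmas
lemma Q_cons (p : Fin n → ℝ) (μCS : ℝ) (i : Fin n) (l : List (Fin n)) :
    (∏ k, (p k / μCS) ^ ((i :: l).count k))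
      = (p i / μCS) * ∏ k, (p k / μCS) ^ (l.count k) := by
  have h : ∀ k : Fin n, (i :: l).count k = l.count k + (if i = k then 1 else 0) := by
    intro k
    by_cases h : i = k <;> simp [List.count_cons, h]
  simp only [h, pow_add]
  rw [Finset.prod_mul_distrib]
  have : ∀ k : Fin n, (p k / μCS) ^ (if i = k then 1 else 0) = if i = k then p k / μCS else 1 := by
    intro k; by_cases h : i = k <;> simp [h]
  simp only [this, Finset.prod_ite_eq, Finset.mem_univ, if_true]
  ring

lemma Q_concat (p : Fin n → ℝ) (μCS : ℝ) (i : Fin n) (l : List (Fin n)) :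
    (∏ k, (p k / μCS) ^ ((l ++ [i]).count k))
      = (p i / μCS) * ∏ k, (p k / μCS) ^ (l.count k) := by
  have h : ∀ k : Fin n, (l ++ [i]).count k = l.count k + (if i = k then 1 else 0) := by
    intro k
    by_cases h : i = k <;> simp [List.count_append, List.count_singleton', h]
  simp only [h, pow_add]
  rw [Finset.prod_mul_distrib]
  have : ∀ k : Fin n, (p k / μCS) ^ (if i = k then 1 else 0) = if i = k then p k / μCS else 1 := by
    intro k; by_cases h : i = k <;> simp [h]
  simp only [this, Finset.prod_ite_eq, Finset.mem_univ, if_true]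
  ring
section ratios
variable {p μc μd μu : Fin n → ℝ} {μCS : ℝ}

lemma ratio_A (z : StSeq n) (i : Fin n) (hc : 0 < z.c i)
    (hμc : μc i ≠ 0) (hμd : μd i ≠ 0) :
    zbar p μc μd μu μCS (iA z i) * (μd i * ((z.d i : ℝ) + 1))
      = zbar p μc μd μu μCS z * μc i := by
  obtain ⟨c', hc'⟩ : ∃ c', z.c i = c' + 1 := ⟨z.c i - 1, by omega⟩
  have h1 : ((Nat.factorial (z.d i) : ℝ)) ≠ 0 := Nat.cast_ne_zero.mpr (Nat.factorial_ne_zero _)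
  have h2 : ((z.d i : ℝ) + 1) ≠ 0 := by positivity
  have core : (p i / μc i) ^ c' * ((p i / μd i) ^ (z.d i + 1) / (Nat.factorial (z.d i + 1) : ℝ))
        * (μd i * ((z.d i : ℝ) + 1))
      = (p i / μc i) ^ (c' + 1) * ((p i / μd i) ^ (z.d i) / (Nat.factorial (z.d i) : ℝ)) * μc i := by
    simp only [pow_succ, Nat.factorial_succ]
    push_cast
    field_simp
  rw [zbar_eq, zbar_eq]
  simp only [iA]
  rw [Pc_update p μc z.c i, Pd_update p μd z.d i, Pc_split p μc z.c i, Pd_split p μd z.d i, hc']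
  simp only [Nat.add_sub_cancel]
  linear_combination ((∏ k, (p k / μCS) ^ (z.q.count k))
    * (∏ k ∈ Finset.univ.erase i, (p k / μc k) ^ (z.c k))
    * (∏ k ∈ Finset.univ.erase i, ((p k / μd k) ^ (z.d k) / (Nat.factorial (z.d k) : ℝ)))
    * (∏ k, ((p k / μu k) ^ (z.u k) / (Nat.factorial (z.u k) : ℝ)))) * core

lemma ratio_B (z : StSeq n) (i : Fin n) (hu : 0 < z.u i)
    (hμc : μc i ≠ 0) (hμu : μu i ≠ 0) :
    zbar p μc μd μu μCS (iB z i) * μc i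
      = zbar p μc μd μu μCS z * (μu i * (z.u i : ℝ)) := by
  obtain ⟨u', hu'⟩ : ∃ u', z.u i = u' + 1 := ⟨z.u i - 1, by omega⟩
  have h1 : ((Nat.factorial u' : ℝ)) ≠ 0 := Nat.cast_ne_zero.mpr (Nat.factorial_ne_zero _)
  have h2 : ((u' : ℝ) + 1) ≠ 0 := by positivity
  have core : (p i / μc i) ^ (z.c i + 1) * ((p i / μu i) ^ u' / (Nat.factorial u' : ℝ)) * μc i
      = (p i / μc i) ^ (z.c i) * ((p i / μu i) ^ (u' + 1) / (Nat.factorial (u' + 1) : ℝ))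
        * (μu i * ((u' : ℝ) + 1)) := by
    simp only [pow_succ, Nat.factorial_succ]
    push_cast
    field_simp
  rw [zbar_eq, zbar_eq]
  simp only [iB]
  rw [Pc_update p μc z.c i, Pd_update p μu z.u i, Pc_split p μc z.c i, Pd_split p μu z.u i, hu']
  simp only [Nat.add_sub_cancel]
  push_cast
  linear_combination ((∏ k, (p k / μCS) ^ (z.q.count k))
    * (∏ k ∈ Finset.univ.erase i, (p k / μc k) ^ (z.c k))
    * (∏ k, ((p k / μd k) ^ (z.d k) / (Nat.factorial (z.d k) : ℝ)))
    * (∏ k ∈ Finset.univ.erase i, ((p k / μu k) ^ (z.u k) / (Nat.factorial (z.u k) : ℝ)))) * core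

lemma ratio_C (z : StSeq n) (i : Fin n) (h : z.q.dropLast ++ [i] = z.q)
    (hμu : μu i ≠ 0) (hμCS : μCS ≠ 0) :
    zbar p μc μd μu μCS (iC z i) * (μu i * ((z.u i : ℝ) + 1))
      = zbar p μc μd μu μCS z * μCS := by
  have h1 : ((Nat.factorial (z.u i) : ℝ)) ≠ 0 := Nat.cast_ne_zero.mpr (Nat.factorial_ne_zero _)
  have h2 : ((z.u i : ℝ) + 1) ≠ 0 := by positivity
  have hQ : (∏ k, (p k / μCS) ^ (z.q.count k))
      = (p i / μCS) * ∏ k, (p k / μCS) ^ ((z.q.dropLast).count k) := by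
    conv_lhs => rw [← h]
    exact Q_concat p μCS i z.q.dropLast
  have core : ((p i / μu i) ^ (z.u i + 1) / (Nat.factorial (z.u i + 1) : ℝ))
        * (μu i * ((z.u i : ℝ) + 1))
      = (p i / μCS) * ((p i / μu i) ^ (z.u i) / (Nat.factorial (z.u i) : ℝ)) * μCS := by
    simp only [pow_succ, Nat.factorial_succ]
    push_cast
    field_simp
  rw [zbar_eq, zbar_eq]
  simp only [iC]
  rw [hQ, Pd_update p μu z.u i, Pd_split p μu z.u i]
  linear_combination ((∏ k, (p k / μCS) ^ ((z.q.dropLast).count k))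
    * (∏ k, (p k / μc k) ^ (z.c k))
    * (∏ k, ((p k / μd k) ^ (z.d k) / (Nat.factorial (z.d k) : ℝ)))
    * (∏ k ∈ Finset.univ.erase i, ((p k / μu k) ^ (z.u k) / (Nat.factorial (z.u k) : ℝ)))) * core

lemma ratio_D (z : StSeq n) (i j : Fin n) (hd : 0 < z.d j)
    (hμd : μd j ≠ 0) (hμCS : μCS ≠ 0) :
    zbar p μc μd μu μCS (iD z i j) * (μCS * p j)
      = zbar p μc μd μu μCS z * (p i * (μd j * (z.d j : ℝ))) := by
  obtain ⟨d', hd'⟩ : ∃ d', z.d j = d' + 1 := ⟨z.d j - 1, by omega⟩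
  have h1 : ((Nat.factorial d' : ℝ)) ≠ 0 := Nat.cast_ne_zero.mpr (Nat.factorial_ne_zero _)
  have h2 : ((d' : ℝ) + 1) ≠ 0 := by positivity
  have core : (p i / μCS) * ((p j / μd j) ^ d' / (Nat.factorial d' : ℝ)) * (μCS * p j)
      = ((p j / μd j) ^ (d' + 1) / (Nat.factorial (d' + 1) : ℝ))
        * (p i * (μd j * ((d' : ℝ) + 1))) := by
    simp only [pow_succ, Nat.factorial_succ]
    push_cast
    field_simp
  rw [zbar_eq, zbar_eq]
  simp only [iD]
  rw [Q_cons, Pd_update p μd z.d j, Pd_split p μd z.d j, hd']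
  simp only [Nat.add_sub_cancel]
  push_cast
  linear_combination ((∏ k, (p k / μCS) ^ (z.q.count k))
    * (∏ k, (p k / μc k) ^ (z.c k))
    * (∏ k ∈ Finset.univ.erase j, ((p k / μd k) ^ (z.d k) / (Nat.factorial (z.d k) : ℝ)))
    * (∏ k, ((p k / μu k) ^ (z.u k) / (Nat.factorial (z.u k) : ℝ)))) * core

end ratios
section support
variable {n : ℕ}

lemma eq_iA_of {z y : StSeq n} {i : Fin n} (h : z = jDC y i) (hd : y.d i ≠ 0) :
    y = iA z i := by
  subst h
  refine (ext' ?_ ?_ ?_ ?_).symm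
  · rfl
  · have h' : y.d i - 1 + 1 = y.d i := by omega
    simp [iA, jDC, Function.update_idem, Function.update_self, h', Function.update_eq_self]
  · simp only [iA, jDC, Function.update_idem, Function.update_self, Nat.add_sub_cancel]
    exact Function.update_eq_self i y.c
  · rfl

lemma eq_iB_of {z y : StSeq n} {i : Fin n} (h : z = jCU y i) (hc : y.c i ≠ 0) :
    y = iB z i := by
  subst h
  refine (ext' ?_ ?_ ?_ ?_).symm
  · rfl
  · rfl
  · have h' : y.c i - 1 + 1 = y.c i := by omega
    simp [iB, jCU, Function.update_idem, Function.update_self, h', Function.update_eq_self]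
  · simp only [iB, jCU, Function.update_idem, Function.update_self, Nat.add_sub_cancel]
    exact Function.update_eq_self i y.u

lemma eq_iC_of {z y : StSeq n} {i : Fin n} (h : z = jApp y i) (hu : y.u i ≠ 0) :
    y = iC z i := by
  subst h
  refine (ext' ?_ ?_ ?_ ?_).symm
  · simp [iC, jApp, List.dropLast_concat]
  · rfl
  · rfl
  · have h' : y.u i - 1 + 1 = y.u i := by omega
    simp [iC, jApp, Function.update_idem, Function.update_self, h', Function.update_eq_self]

lemma eq_iD_of {z y : StSeq n} {j : Fin n} (h : z = jCS y j) (hq : y.q ≠ []) :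
    y = iD z (y.q.head hq) j := by
  subst h
  refine (ext' ?_ ?_ ?_ ?_).symm
  · simp [iD, jCS, List.cons_head_tail]
  · simp only [iD, jCS, Function.update_idem, Function.update_self, Nat.add_sub_cancel]
    exact Function.update_eq_self j y.d
  · rfl
  · rfl

-- forward identities at candidate points
lemma jDC_iA {z : StSeq n} {i : Fin n} (hc : 0 < z.c i) : z = jDC (iA z i) i := by
  refine ext' ?_ ?_ ?_ ?_
  · rfl
  · simp only [jDC, iA, Function.update_idem, Function.update_self, Nat.add_sub_cancel]
    exact (Function.update_eq_self i z.d).symm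
  · have h' : z.c i - 1 + 1 = z.c i := by omega
    simp [jDC, iA, Function.update_idem, Function.update_self, h', Function.update_eq_self]
  · rfl

lemma jCU_iB {z : StSeq n} {i : Fin n} (hu : 0 < z.u i) : z = jCU (iB z i) i := by
  refine ext' ?_ ?_ ?_ ?_
  · rfl
  · rfl
  · simp only [jCU, iB, Function.update_idem, Function.update_self, Nat.add_sub_cancel]
    exact (Function.update_eq_self i z.c).symm
  · have h' : z.u i - 1 + 1 = z.u i := by omega
    simp [jCU, iB, Function.update_idem, Function.update_self, h', Function.update_eq_self]

lemma jApp_iC {z : StSeq n} {i : Fin n} (h : z.q.dropLast ++ [i] = z.q) :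
    z = jApp (iC z i) i := by
  refine ext' ?_ ?_ ?_ ?_
  · simp [jApp, iC, h]
  · rfl
  · rfl
  · simp only [jApp, iC, Function.update_idem, Function.update_self, Nat.add_sub_cancel]
    exact (Function.update_eq_self i z.u).symm

lemma jCS_iD {z : StSeq n} {i j : Fin n} (hd : 0 < z.d j) : z = jCS (iD z i j) j := by
  refine ext' ?_ ?_ ?_ ?_
  · rfl
  · have h' : z.d j - 1 + 1 = z.d j := by omega
    simp [jCS, iD, Function.update_idem, Function.update_self, h', Function.update_eq_self]
  · rfl
  · rfl

end support
section values
variable {p μc μd μu : Fin n → ℝ} {μCS : ℝ} {m : ℕ}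

lemma val_A (z : StSeq n) (i : Fin n) (hz : totalSeq z = m)
    (hμc : μc i ≠ 0) (hμd : μd i ≠ 0) :
    (if totalSeq (iA z i) = m then
       zbar p μc μd μu μCS (iA z i) *
         (if z = jDC (iA z i) i then μd i * (((iA z i).d i : ℝ)) else 0)
     else 0)
      = if 0 < z.c i then zbar p μc μd μu μCS z * μc i else 0 := by
  by_cases hc : 0 < z.c i
  · have hA : (iA z i).d i = z.d i + 1 := by simp [iA]
    rw [if_pos (by rw [totalSeq_iA_pos hc, hz]), if_pos (jDC_iA hc), if_pos hc, hA]
    push_cast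
    exact ratio_A z i hc hμc hμd
  · have ht : totalSeq (iA z i) = m + 1 := by rw [totalSeq_iA_zero (by omega), hz]
    rw [if_neg (by omega), if_neg hc]

lemma val_B (z : StSeq n) (i : Fin n) (hz : totalSeq z = m)
    (hμc : μc i ≠ 0) (hμu : μu i ≠ 0) :
    (if totalSeq (iB z i) = m then
       zbar p μc μd μu μCS (iB z i) *
         (if z = jCU (iB z i) i then (if 0 < (iB z i).c i then μc i else 0) else 0)
     else 0)
      = zbar p μc μd μu μCS z * (μu i * (z.u i : ℝ)) := by
  by_cases hu : 0 < z.u i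
  · have h1 : (iB z i).c i = z.c i + 1 := by simp [iB]
    rw [if_pos (by rw [totalSeq_iB_pos hu, hz]), if_pos (jCU_iB hu), h1,
      if_pos (Nat.succ_pos _)]
    exact ratio_B z i hu hμc hμu
  · have h0 : z.u i = 0 := by omega
    have ht : totalSeq (iB z i) = m + 1 := by rw [totalSeq_iB_zero h0, hz]
    rw [if_neg (by omega), h0]
    simp

lemma val_C (z : StSeq n) (i : Fin n) (hz : totalSeq z = m)
    (hμu : μu i ≠ 0) (hμCS : μCS ≠ 0) :
    (if totalSeq (iC z i) = m then
       zbar p μc μd μu μCS (iC z i) *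
         (if z = jApp (iC z i) i then μu i * (((iC z i).u i : ℝ)) else 0)
     else 0)
      = if z.q.dropLast ++ [i] = z.q then zbar p μc μd μu μCS z * μCS else 0 := by
  by_cases h : z.q.dropLast ++ [i] = z.q
  · have hq : z.q ≠ [] := by
      intro he; rw [he] at h; simp at h
    have h1 : (iC z i).u i = z.u i + 1 := by simp [iC]
    rw [if_pos (by rw [totalSeq_iC hq, hz]), if_pos (jApp_iC h), h1, if_pos h]
    push_cast
    exact ratio_C z i h hμu hμCS
  · have hne : z ≠ jApp (iC z i) i := by
      intro he
      apply h
      have h2 := congrArg StSeq.q he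
      simp only [jApp, iC] at h2
      exact h2.symm
    rw [if_neg hne, if_neg h]
    simp

lemma val_D (z : StSeq n) (i j : Fin n) (hz : totalSeq z = m)
    (hμd : μd j ≠ 0) (hμCS : μCS ≠ 0) :
    (if totalSeq (iD z i j) = m then
       zbar p μc μd μu μCS (iD z i j) *
         (if z = jCS (iD z i j) j ∧ (iD z i j).q ≠ [] then μCS * p j else 0)
     else 0)
      = if 0 < z.d j then zbar p μc μd μu μCS z * (p i * (μd j * (z.d j : ℝ))) else 0 := by
  by_cases hd : 0 < z.d j
  · rw [if_pos (by rw [totalSeq_iD_pos hd, hz]), if_pos ⟨jCS_iD hd, by simp [iD]⟩, if_pos hd]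
    exact ratio_D z i j hd hμd hμCS
  · have ht : totalSeq (iD z i j) = m + 1 := by rw [totalSeq_iD_zero (by omega), hz]
    rw [if_neg (by omega), if_neg hd]

lemma valR_A (z : StSeq n) (i : Fin n) (hz : totalSeq z = m) :
    (if totalSeq (jDC z i) = m then (if jDC z i = jDC z i then μd i * ((z.d i : ℝ)) else 0) else 0)
      = μd i * (z.d i : ℝ) := by
  rw [if_pos rfl]
  by_cases hd : 0 < z.d i
  · rw [if_pos (by rw [totalSeq_jDC_pos hd, hz])]
  · have h0 : z.d i = 0 := by omega
    have ht : totalSeq (jDC z i) = m + 1 := by rw [totalSeq_jDC_zero h0, hz]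
    rw [if_neg (by omega), h0]
    simp

lemma valR_B (z : StSeq n) (i : Fin n) (hz : totalSeq z = m) :
    (if totalSeq (jCU z i) = m then
       (if jCU z i = jCU z i then (if 0 < z.c i then μc i else 0) else 0) else 0)
      = if 0 < z.c i then μc i else 0 := by
  rw [if_pos rfl]
  by_cases hc : 0 < z.c i
  · rw [if_pos (by rw [totalSeq_jCU_pos hc, hz])]
  · rw [if_neg hc]
    simp

lemma valR_C (z : StSeq n) (i : Fin n) (hz : totalSeq z = m) :
    (if totalSeq (jApp z i) = m then (if jApp z i = jApp z i then μu i * ((z.u i : ℝ)) else 0) else 0)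
      = μu i * (z.u i : ℝ) := by
  rw [if_pos rfl]
  by_cases hu : 0 < z.u i
  · rw [if_pos (by rw [totalSeq_jApp_pos hu, hz])]
  · have h0 : z.u i = 0 := by omega
    have ht : totalSeq (jApp z i) = m + 1 := by rw [totalSeq_jApp_zero h0, hz]
    rw [if_neg (by omega), h0]
    simp

lemma valR_D (z : StSeq n) (j : Fin n) (hz : totalSeq z = m) :
    (if totalSeq (jCS z j) = m then
       (if jCS z j = jCS z j ∧ z.q ≠ [] then μCS * p j else 0) else 0)
      = if z.q ≠ [] then μCS * p j else 0 := by
  by_cases hq : z.q = []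
  · simp [hq]
  · rw [if_pos (show jCS z j = jCS z j ∧ z.q ≠ [] from ⟨rfl, hq⟩),
      if_pos (by rw [totalSeq_jCS hq, hz]), if_pos hq]

lemma sum_dropLast (z : StSeq n) (K : ℝ) :
    (∑ i, if z.q.dropLast ++ [i] = z.q then K else 0) = if z.q ≠ [] then K else 0 := by
  by_cases hq : z.q = []
  · simp [hq]
  · rw [if_pos hq]
    have hcond : ∀ i : Fin n, (z.q.dropLast ++ [i] = z.q) ↔ i = z.q.getLast hq := by
      intro i
      constructor
      · intro h
        have h1 : z.q.getLast? = some i := by rw [← h]; exact List.getLast?_concat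
        have h2 : z.q.getLast? = some (z.q.getLast hq) := List.getLast?_eq_getLast hq
        rw [h1] at h2
        exact (Option.some.injEq _ _ ▸ h2 : i = _)
      · rintro rfl
        exact List.dropLast_append_getLast hq
    simp only [hcond]
    simp

end values
section decomp
variable (p μc μd μu : Fin n → ℝ) (μCS : ℝ) (m : ℕ) (z : StSeq n)

noncomputable def F1 (i : Fin n) (y : StSeq n) : ℝ :=
  if totalSeq y = m then
    zbar p μc μd μu μCS y * (if z = jDC y i then μd i * ((y.d i : ℝ)) else 0) else 0
noncomputable def F2 (i : Fin n) (y : StSeq n) : ℝ :=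
  if totalSeq y = m then
    zbar p μc μd μu μCS y * (if z = jCU y i then (if 0 < y.c i then μc i else 0) else 0) else 0
noncomputable def F3 (i : Fin n) (y : StSeq n) : ℝ :=
  if totalSeq y = m then
    zbar p μc μd μu μCS y * (if z = jApp y i then μu i * ((y.u i : ℝ)) else 0) else 0
noncomputable def F4 (j : Fin n) (y : StSeq n) : ℝ :=
  if totalSeq y = m then
    zbar p μc μd μu μCS y * (if z = jCS y j ∧ y.q ≠ [] then μCS * p j else 0) else 0
noncomputable def G1 (i : Fin n) (y : StSeq n) : ℝ :=
  if totalSeq y = m then (if y = jDC z i then μd i * ((z.d i : ℝ)) else 0) else 0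
noncomputable def G2 (i : Fin n) (y : StSeq n) : ℝ :=
  if totalSeq y = m then (if y = jCU z i then (if 0 < z.c i then μc i else 0) else 0) else 0
noncomputable def G3 (i : Fin n) (y : StSeq n) : ℝ :=
  if totalSeq y = m then (if y = jApp z i then μu i * ((z.u i : ℝ)) else 0) else 0
noncomputable def G4 (j : Fin n) (y : StSeq n) : ℝ :=
  if totalSeq y = m then (if y = jCS z j ∧ z.q ≠ [] then μCS * p j else 0) else 0

variable {p μc μd μu μCS m z}

lemma F1_eq_zero {i : Fin n} (hμd : μd i ≠ 0) (y : StSeq n) (hy : y ≠ iA z i) :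
    F1 p μc μd μu μCS m z i y = 0 := by
  unfold F1
  by_cases h1 : totalSeq y = m
  · rw [if_pos h1]
    by_cases h2 : z = jDC y i
    · rw [if_pos h2]
      by_cases h3 : y.d i = 0
      · simp [h3]
      · exact absurd (eq_iA_of h2 h3) hy
    · simp [h2]
  · simp [h1]

lemma F2_eq_zero {i : Fin n} (y : StSeq n) (hy : y ≠ iB z i) :
    F2 p μc μd μu μCS m z i y = 0 := by
  unfold F2
  by_cases h1 : totalSeq y = m
  · rw [if_pos h1]
    by_cases h2 : z = jCU y i
    · rw [if_pos h2]
      by_cases h3 : 0 < y.c i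
      · exact absurd (eq_iB_of h2 (by omega)) hy
      · simp [h3]
    · simp [h2]
  · simp [h1]

lemma F3_eq_zero {i : Fin n} (hμu : μu i ≠ 0) (y : StSeq n) (hy : y ≠ iC z i) :
    F3 p μc μd μu μCS m z i y = 0 := by
  unfold F3
  by_cases h1 : totalSeq y = m
  · rw [if_pos h1]
    by_cases h2 : z = jApp y i
    · rw [if_pos h2]
      by_cases h3 : y.u i = 0
      · simp [h3]
      · exact absurd (eq_iC_of h2 h3) hy
    · simp [h2]
  · simp [h1]

lemma F4_eq_zero {j : Fin n} (y : StSeq n)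
    (hy : y ∉ Finset.univ.image (fun i => iD z i j)) :
    F4 p μc μd μu μCS m z j y = 0 := by
  unfold F4
  by_cases h1 : totalSeq y = m
  · rw [if_pos h1]
    by_cases h2 : z = jCS y j ∧ y.q ≠ []
    · exfalso
      apply hy
      rw [Finset.mem_image]
      exact ⟨y.q.head h2.2, Finset.mem_univ _, (eq_iD_of h2.1 h2.2).symm⟩
    · simp [h2]
  · simp [h1]

lemma G1_eq_zero {i : Fin n} (y : StSeq n) (hy : y ≠ jDC z i) :
    G1 μd m z i y = 0 := by
  unfold G1; simp [hy]
lemma G2_eq_zero {i : Fin n} (y : StSeq n) (hy : y ≠ jCU z i) :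
    G2 μc m z i y = 0 := by
  unfold G2; simp [hy]
lemma G3_eq_zero {i : Fin n} (y : StSeq n) (hy : y ≠ jApp z i) :
    G3 μu m z i y = 0 := by
  unfold G3; simp [hy]
lemma G4_eq_zero {j : Fin n} (y : StSeq n) (hy : y ≠ jCS z j) :
    G4 p μCS m z j y = 0 := by
  unfold G4; simp [hy]

end decomp
end StSeq

open StSeq

/-- The unnormalized weight `ζ̄` satisfies the global balance equations of the
sequence-level generator on the state space `S_m`:
`Σ_{y ∈ S_m} ζ̄(y) r(y,z) = ζ̄(z) Σ_{y ∈ S_m} r(z,y)` for every `z ∈ S_m`. -/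
theorem stmt17 (n m : ℕ) (hn : 1 ≤ n) (hm : 1 ≤ m)
    (p μc μd μu : Fin n → ℝ) (μCS : ℝ)
    (hp : ∀ i, 0 < p i) (hpsum : ∑ i, p i = 1)
    (hμc : ∀ i, 0 < μc i) (hμd : ∀ i, 0 < μd i) (hμu : ∀ i, 0 < μu i) (hμCS : 0 < μCS)
    (z : StSeq n) (hz : totalSeq z = m) :
    (∑' y : StSeq n,
        if totalSeq y = m then zbar p μc μd μu μCS y * rate p μc μd μu μCS y z else 0) =
      zbar p μc μd μu μCS z *
        ∑' y : StSeq n, if totalSeq y = m then rate p μc μd μu μCS z y else 0 := by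
  classical
  have s1 : ∀ i : Fin n, Summable (F1 p μc μd μu μCS m z i) := fun i =>
    summable_of_ne_finset_zero (s := {iA z i}) fun y hy =>
      F1_eq_zero (ne_of_gt (hμd i)) y (by simpa using hy)
  have s2 : ∀ i : Fin n, Summable (F2 p μc μd μu μCS m z i) := fun i =>
    summable_of_ne_finset_zero (s := {iB z i}) fun y hy => F2_eq_zero y (by simpa using hy)
  have s3 : ∀ i : Fin n, Summable (F3 p μc μd μu μCS m z i) := fun i =>
    summable_of_ne_finset_zero (s := {iC z i}) fun y hy =>
      F3_eq_zero (ne_of_gt (hμu i)) y (by simpa using hy)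
  have s4 : ∀ j : Fin n, Summable (F4 p μc μd μu μCS m z j) := fun j =>
    summable_of_ne_finset_zero (s := Finset.univ.image (fun i => iD z i j)) fun y hy =>
      F4_eq_zero y hy
  have S1 : Summable (fun y => ∑ i, F1 p μc μd μu μCS m z i y) := summable_sum fun i _ => s1 i
  have S2 : Summable (fun y => ∑ i, F2 p μc μd μu μCS m z i y) := summable_sum fun i _ => s2 i
  have S3 : Summable (fun y => ∑ i, F3 p μc μd μu μCS m z i y) := summable_sum fun i _ => s3 i
  have S4 : Summable (fun y => ∑ j, F4 p μc μd μu μCS m z j y) := summable_sum fun j _ => s4 j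
  have sG1 : ∀ i : Fin n, Summable (G1 μd m z i) := fun i =>
    summable_of_ne_finset_zero (s := {jDC z i}) fun y hy => G1_eq_zero y (by simpa using hy)
  have sG2 : ∀ i : Fin n, Summable (G2 μc m z i) := fun i =>
    summable_of_ne_finset_zero (s := {jCU z i}) fun y hy => G2_eq_zero y (by simpa using hy)
  have sG3 : ∀ i : Fin n, Summable (G3 μu m z i) := fun i =>
    summable_of_ne_finset_zero (s := {jApp z i}) fun y hy => G3_eq_zero y (by simpa using hy)
  have sG4 : ∀ j : Fin n, Summable (G4 p μCS m z j) := fun j =>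
    summable_of_ne_finset_zero (s := {jCS z j}) fun y hy => G4_eq_zero y (by simpa using hy)
  have SG1 : Summable (fun y => ∑ i, G1 μd m z i y) := summable_sum fun i _ => sG1 i
  have SG2 : Summable (fun y => ∑ i, G2 μc m z i y) := summable_sum fun i _ => sG2 i
  have SG3 : Summable (fun y => ∑ i, G3 μu m z i y) := summable_sum fun i _ => sG3 i
  have SG4 : Summable (fun y => ∑ j, G4 p μCS m z j y) := summable_sum fun j _ => sG4 j
  have hfun : ∀ y : StSeq n,
      (if totalSeq y = m then zbar p μc μd μu μCS y * rate p μc μd μu μCS y z else 0)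
        = (∑ i, F1 p μc μd μu μCS m z i y) + (∑ i, F2 p μc μd μu μCS m z i y)
          + (∑ i, F3 p μc μd μu μCS m z i y) + (∑ j, F4 p μc μd μu μCS m z j y) := by
    intro y
    by_cases h : totalSeq y = m
    · simp only [rate, F1, F2, F3, F4, if_pos h, mul_add, Finset.mul_sum]
    · simp [F1, F2, F3, F4, h]
  have hfunR : ∀ y : StSeq n,
      (if totalSeq y = m then rate p μc μd μu μCS z y else 0)
        = (∑ i, G1 μd m z i y) + (∑ i, G2 μc m z i y)
          + (∑ i, G3 μu m z i y) + (∑ j, G4 p μCS m z j y) := by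
    intro y
    by_cases h : totalSeq y = m
    · simp only [rate, G1, G2, G3, G4, if_pos h]
    · simp [G1, G2, G3, G4, h]
  have e1 : ∀ i : Fin n, ∑' y, F1 p μc μd μu μCS m z i y
      = (if 0 < z.c i then zbar p μc μd μu μCS z * μc i else 0) := by
    intro i
    rw [tsum_eq_single (iA z i) fun y hy => F1_eq_zero (ne_of_gt (hμd i)) y hy]
    exact val_A z i hz (ne_of_gt (hμc i)) (ne_of_gt (hμd i))
  have e2 : ∀ i : Fin n, ∑' y, F2 p μc μd μu μCS m z i y
      = zbar p μc μd μu μCS z * (μu i * (z.u i : ℝ)) := by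
    intro i
    rw [tsum_eq_single (iB z i) fun y hy => F2_eq_zero y hy]
    exact val_B z i hz (ne_of_gt (hμc i)) (ne_of_gt (hμu i))
  have e3 : ∀ i : Fin n, ∑' y, F3 p μc μd μu μCS m z i y
      = (if z.q.dropLast ++ [i] = z.q then zbar p μc μd μu μCS z * μCS else 0) := by
    intro i
    rw [tsum_eq_single (iC z i) fun y hy => F3_eq_zero (ne_of_gt (hμu i)) y hy]
    exact val_C z i hz (ne_of_gt (hμu i)) (ne_of_gt hμCS)
  have e4 : ∀ j : Fin n, ∑' y, F4 p μc μd μu μCS m z j y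
      = zbar p μc μd μu μCS z * (μd j * (z.d j : ℝ)) := by
    intro j
    rw [tsum_eq_sum (s := Finset.univ.image fun i => iD z i j) fun y hy => F4_eq_zero y hy]
    rw [Finset.sum_image (fun i _ i' _ h => by
      have hq := congrArg StSeq.q h
      simp only [iD, List.cons.injEq] at hq
      exact hq.1)]
    have hval : ∀ i : Fin n, F4 p μc μd μu μCS m z j (iD z i j)
        = (if 0 < z.d j then zbar p μc μd μu μCS z * (p i * (μd j * (z.d j : ℝ))) else 0) :=
      fun i => val_D z i j hz (ne_of_gt (hμd j)) (ne_of_gt hμCS)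
    rw [Finset.sum_congr rfl fun i _ => hval i]
    by_cases hd : 0 < z.d j
    · simp only [if_pos hd, ← Finset.mul_sum, ← Finset.sum_mul, hpsum, one_mul]
    · have h0 : (z.d j : ℝ) = 0 := by norm_cast; omega
      simp [hd, h0]
  have eR1 : ∀ i : Fin n, ∑' y, G1 μd m z i y = μd i * (z.d i : ℝ) := by
    intro i
    rw [tsum_eq_single (jDC z i) fun y hy => G1_eq_zero y hy]
    exact valR_A z i hz
  have eR2 : ∀ i : Fin n, ∑' y, G2 μc m z i y = (if 0 < z.c i then μc i else 0) := by
    intro i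
    rw [tsum_eq_single (jCU z i) fun y hy => G2_eq_zero y hy]
    exact valR_B z i hz
  have eR3 : ∀ i : Fin n, ∑' y, G3 μu m z i y = μu i * (z.u i : ℝ) := by
    intro i
    rw [tsum_eq_single (jApp z i) fun y hy => G3_eq_zero y hy]
    exact valR_C z i hz
  have eR4 : ∀ j : Fin n, ∑' y, G4 p μCS m z j y = (if z.q ≠ [] then μCS * p j else 0) := by
    intro j
    rw [tsum_eq_single (jCS z j) fun y hy => G4_eq_zero y hy]
    exact valR_D z j hz
  rw [tsum_congr hfun, Summable.tsum_add ((S1.add S2).add S3) S4, Summable.tsum_add (S1.add S2) S3,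
    Summable.tsum_add S1 S2, Summable.tsum_finsetSum (fun i _ => s1 i), Summable.tsum_finsetSum (fun i _ => s2 i),
    Summable.tsum_finsetSum (fun i _ => s3 i), Summable.tsum_finsetSum (fun j _ => s4 j)]
  rw [tsum_congr hfunR, Summable.tsum_add ((SG1.add SG2).add SG3) SG4, Summable.tsum_add (SG1.add SG2) SG3,
    Summable.tsum_add SG1 SG2, Summable.tsum_finsetSum (fun i _ => sG1 i), Summable.tsum_finsetSum (fun i _ => sG2 i),
    Summable.tsum_finsetSum (fun i _ => sG3 i), Summable.tsum_finsetSum (fun j _ => sG4 j)]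
  simp only [e1, e2, e3, e4, eR1, eR2, eR3, eR4]
  rw [sum_dropLast z (zbar p μc μd μu μCS z * μCS)]
  have hps : (∑ j, if z.q ≠ [] then μCS * p j else 0) = if z.q ≠ [] then μCS else 0 := by
    split <;> simp [← Finset.mul_sum, hpsum]
  rw [hps]
  simp only [mul_add, Finset.mul_sum, mul_ite, mul_zero]
  ring
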